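/- Let V_n, V ∈ H₊^{−m} with V_n → V in H₊^{−m}. Then the associated forms satisfy: for every u ∈ H₊^m, |t₊^{(n)}[u] − t₊[u]| ≤ a_n ‖u‖²_{L²} + b_n Re t₊[u], where a_n, b_n ≥ 0 and a_n, b_n → 0 as n → ∞. -/

import Mathlib

set_option maxHeartbeats 1000000


/- STATEMENT 14 (form convergence): V_n → V in H₊^{−m} implies
|t₊⁽ⁿ⁾[u] − t₊[u]| ≤ a_n‖u‖²_{L²} + b_n Re t₊[u] for all u ∈ H₊^m,
with a_n, b_n ≥ 0 tending to 0.  Fourier-coefficient model: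
t₊[u] = Σ_k (2kπ)^{2m}|û(2k)|² + Σ_k (V̂*û)(k) conj(û(2k)), the H₊^s
norms are the weighted ℓ² norms with weights ⟨2k⟩^{2s}. -/

noncomputable section
open Complex Filter

def wtp (s : ℝ) (k : ℤ) : ℝ := ((1 + |(2 * k : ℤ)| : ℝ)) ^ (2 * s)

def conv (a b : ℤ → ℂ) (k : ℤ) : ℂ := ∑' j : ℤ, a (k - j) * b j

/-- `H₊^{-m}` norm of a coefficient sequence. -/
def hmnorm (m : ℕ) (a : ℤ → ℂ) : ℝ :=
  (∑' k : ℤ, wtp (-(m : ℝ)) k * ‖a k‖ ^ 2) ^ ((1 : ℝ) / 2)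

namespace FC

/-- the weight base -/
def g (k : ℤ) : ℝ := (1 + |(2 * k : ℤ)| : ℝ)

lemma g_cast (k : ℤ) : g k = 1 + |(2 * (k : ℝ))| := by simp only [g]; push_cast; ring

lemma one_le_g (k : ℤ) : 1 ≤ g k := by
  rw [g_cast]; have := abs_nonneg (2 * (k : ℝ)); linarith

lemma g_pos (k : ℤ) : 0 < g k := lt_of_lt_of_le one_pos (one_le_g k)

lemma g_neg (k : ℤ) : g (-k) = g k := by
  rw [g_cast, g_cast]; push_cast; rw [mul_neg, abs_neg]

lemma g_le_add (l j : ℤ) : g l ≤ g j + g (j + l) := by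
  rw [g_cast, g_cast, g_cast]
  have h := abs_sub (2 * (j : ℝ) + 2 * l) (2 * (j : ℝ))
  have e : (2 * (j : ℝ) + 2 * l) - 2 * j = 2 * l := by ring
  rw [e] at h
  have e2 : 2 * (((j : ℤ) + l : ℤ) : ℝ) = 2 * (j : ℝ) + 2 * l := by push_cast; ring
  rw [e2]; linarith

lemma wtp_eq (m : ℕ) (k : ℤ) : wtp (m : ℝ) k = g k ^ (2 * m) := by
  have : (2 * (m : ℝ)) = ((2 * m : ℕ) : ℝ) := by push_cast; ring
  rw [wtp, this, Real.rpow_natCast]; rfl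

lemma wtp_neg_eq (m : ℕ) (k : ℤ) : wtp (-(m : ℝ)) k = (g k ^ (2 * m))⁻¹ := by
  have h : (2 * (-(m : ℝ))) = -((2 * m : ℕ) : ℝ) := by push_cast; ring
  rw [wtp, h, Real.rpow_neg (by positivity), Real.rpow_natCast]; rfl

lemma gpow_pos (m : ℕ) (k : ℤ) : 0 < g k ^ m := pow_pos (g_pos k) m

lemma one_le_gpow (m : ℕ) (k : ℤ) : 1 ≤ g k ^ m := one_le_pow₀ (one_le_g k)

/-- Cauchy–Schwarz for tsums of nonnegative reals. -/
lemma tsum_cs {ι : Type*} (x y : ι → ℝ) (hx : ∀ i, 0 ≤ x i) (hy : ∀ i, 0 ≤ y i)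
    (hx2 : Summable fun i => x i ^ 2) (hy2 : Summable fun i => y i ^ 2) :
    Summable (fun i => x i * y i) ∧
      ∑' i, x i * y i ≤ Real.sqrt (∑' i, x i ^ 2) * Real.sqrt (∑' i, y i ^ 2) := by
  have hsum : Summable (fun i => x i * y i) := by
    apply Summable.of_nonneg_of_le (fun i => mul_nonneg (hx i) (hy i))
      (fun i => ?_) ((hx2.add hy2).div_const 2)
    have := two_mul_le_add_sq (x i) (y i)
    nlinarith
  refine ⟨hsum, Summable.tsum_le_of_sum_le hsum fun s => ?_⟩
  have h1 : (∑ i ∈ s, x i * y i) ^ 2 ≤ (∑ i ∈ s, x i ^ 2) * (∑ i ∈ s, y i ^ 2) :=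
    Finset.sum_mul_sq_le_sq_mul_sq s x y
  have h2 : (∑ i ∈ s, x i ^ 2) ≤ ∑' i, x i ^ 2 :=
    Summable.sum_le_tsum s (fun i _ => sq_nonneg _) hx2
  have h3 : (∑ i ∈ s, y i ^ 2) ≤ ∑' i, y i ^ 2 :=
    Summable.sum_le_tsum s (fun i _ => sq_nonneg _) hy2
  have hs0 : 0 ≤ ∑ i ∈ s, x i * y i :=
    Finset.sum_nonneg fun i _ => mul_nonneg (hx i) (hy i)
  calc ∑ i ∈ s, x i * y i = Real.sqrt ((∑ i ∈ s, x i * y i) ^ 2) := by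
        rw [Real.sqrt_sq hs0]
    _ ≤ Real.sqrt ((∑' i, x i ^ 2) * (∑' i, y i ^ 2)) := by
        apply Real.sqrt_le_sqrt
        calc (∑ i ∈ s, x i * y i) ^ 2 ≤ (∑ i ∈ s, x i ^ 2) * (∑ i ∈ s, y i ^ 2) := h1
          _ ≤ (∑' i, x i ^ 2) * (∑' i, y i ^ 2) := by
              apply mul_le_mul h2 h3 (Finset.sum_nonneg fun i _ => sq_nonneg _)
                (tsum_nonneg fun i => sq_nonneg _)
    _ = _ := Real.sqrt_mul (tsum_nonneg fun i => sq_nonneg _) _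

lemma summable_shift {a : ℤ → ℝ} (h : Summable a) (l : ℤ) : Summable fun j => a (j + l) :=
  (Equiv.addRight l).summable_iff.mpr h

lemma tsum_shift (a : ℤ → ℝ) (l : ℤ) : ∑' j, a (j + l) = ∑' j, a j :=
  (Equiv.addRight l).tsum_eq a

/-- summability of the weight `wtp (-m)` for `m ≥ 1`. -/
lemma summable_wtp_neg (m : ℕ) (hm : 1 ≤ m) : Summable fun l : ℤ => wtp (-(m : ℝ)) l := by
  have key : Summable fun l : ℤ => (g l ^ 2)⁻¹ := by
    have hnat : Summable fun n : ℕ => ((n : ℝ) + 1)⁻¹ ^ 2 := by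
      have := Real.summable_one_div_nat_pow.mpr (le_refl 2)
      simpa [div_eq_mul_inv, inv_pow] using (summable_nat_add_iff 1).mpr this
    have hbound : ∀ n : ℕ, (g (n : ℤ) ^ 2)⁻¹ ≤ ((n : ℝ) + 1)⁻¹ ^ 2 := by
      intro n
      rw [← inv_pow]
      apply pow_le_pow_left₀ (inv_nonneg.mpr (le_of_lt (g_pos _)))
      apply inv_anti₀ (by positivity)
      rw [g_cast]
      rw [_root_.abs_of_nonneg (by positivity : (0:ℝ) ≤ 2 * ((n : ℤ) : ℝ))]
      push_cast; linarith
    have h1 : Summable fun n : ℕ => (g (n : ℤ) ^ 2)⁻¹ :=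
      Summable.of_nonneg_of_le (fun n => inv_nonneg.mpr (le_of_lt (gpow_pos 2 _)))
        hbound hnat
    have h2 : Summable fun n : ℕ => (g (-(n : ℤ)) ^ 2)⁻¹ := by
      simp only [g_neg]; exact h1
    exact Summable.of_nat_of_neg h1 h2
  apply Summable.of_nonneg_of_le (fun l => le_of_lt (by
    rw [wtp_neg_eq]; exact inv_pos.mpr (gpow_pos _ _))) (fun l => ?_) key
  rw [wtp_neg_eq]
  apply inv_anti₀ (gpow_pos 2 l)
  exact pow_le_pow_right₀ (one_le_g l) (by omega)


lemma summable_reflect {a : ℤ → ℝ} (h : Summable a) (k : ℤ) :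
    Summable fun j => a (k - j) :=
  (Equiv.subLeft k).summable_iff.mpr h

lemma g_sub_le (k j : ℤ) : g (k - j) ≤ g k * g j := by
  rw [g_cast, g_cast, g_cast]
  have h := abs_sub (2 * (k : ℝ)) (2 * (j : ℝ))
  have e : 2 * (((k : ℤ) - j : ℤ) : ℝ) = 2 * (k : ℝ) - 2 * (j : ℝ) := by push_cast; ring
  rw [e]
  have h1 := abs_nonneg (2 * (k : ℝ))
  have h2 := abs_nonneg (2 * (j : ℝ))
  nlinarith [mul_nonneg h1 h2]

def Gfun (W u : ℤ → ℂ) (p : ℤ × ℤ) : ℝ := ‖W p.1‖ * (‖u p.2‖ * ‖u (p.2 + p.1)‖)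

lemma Gfun_nonneg (W u : ℤ → ℂ) (p : ℤ × ℤ) : 0 ≤ Gfun W u p := by
  unfold Gfun; positivity

/-- index shear on `ℤ × ℤ` -/
def shear : ℤ × ℤ ≃ ℤ × ℤ where
  toFun p := (p.1 - p.2, p.2)
  invFun p := (p.1 + p.2, p.2)
  left_inv p := by obtain ⟨x, y⟩ := p; simp
  right_inv p := by obtain ⟨x, y⟩ := p; simp

lemma pipeline (m : ℕ) (W u : ℤ → ℂ)
    (hW : Summable fun k : ℤ => wtp (-(m : ℝ)) k * ‖W k‖ ^ 2)
    (hu : Summable fun k : ℤ => wtp (m : ℝ) k * ‖u k‖ ^ 2)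
    (hG : Summable (Gfun W u)) :
    (∀ k, Summable fun j : ℤ => W (k - j) * u j) ∧
    Summable (fun k : ℤ => conv W u k * (starRingEnd ℂ) (u k)) ∧
    ‖∑' k : ℤ, conv W u k * (starRingEnd ℂ) (u k)‖ ≤ ∑' p : ℤ × ℤ, Gfun W u p := by
  have hf2 : Summable fun k : ℤ => (g k ^ m * ‖u k‖) ^ 2 := by
    apply hu.congr
    intro k
    rw [wtp_eq, mul_pow, ← pow_mul, Nat.mul_comm m 2]
  have hc2 : Summable fun l : ℤ => (‖W l‖ / g l ^ m) ^ 2 := by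
    apply hW.congr
    intro l
    rw [wtp_neg_eq, div_pow, ← pow_mul, Nat.mul_comm m 2, div_eq_mul_inv, mul_comm]
  -- (c1) and norm-summability of the convolution series
  have hnorm : ∀ k : ℤ, Summable fun j : ℤ => ‖W (k - j) * u j‖ := by
    intro k
    have hx2 : Summable fun j : ℤ => (‖W (k - j)‖ / g (k - j) ^ m) ^ 2 :=
      summable_reflect hc2 k
    have hCS := tsum_cs (fun j => ‖W (k - j)‖ / g (k - j) ^ m)
      (fun j => g j ^ m * ‖u j‖)
      (fun j => div_nonneg (norm_nonneg _) (gpow_pos m _).le)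
      (fun j => mul_nonneg (gpow_pos m _).le (norm_nonneg _)) hx2 hf2
    apply Summable.of_nonneg_of_le (fun j => norm_nonneg _) (fun j => ?_)
      (hCS.1.mul_left (g k ^ m))
    have hpow : g (k - j) ^ m ≤ g k ^ m * g j ^ m := by
      rw [← mul_pow]; exact pow_le_pow_left₀ (g_pos _).le (g_sub_le k j) m
    have hcnn : 0 ≤ ‖W (k - j)‖ / g (k - j) ^ m :=
      div_nonneg (norm_nonneg _) (gpow_pos m _).le
    have e : ‖W (k - j)‖ = g (k - j) ^ m * (‖W (k - j)‖ / g (k - j) ^ m) := by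
      field_simp
      exact (mul_div_cancel_right₀ _ (ne_of_gt (gpow_pos m _))).symm
    rw [norm_mul]; nth_rw 1 [e]
    have := mul_le_mul_of_nonneg_right hpow
      (mul_nonneg hcnn (norm_nonneg (u j)))
    nlinarith [this]
  have hconv1 : ∀ k : ℤ, Summable fun j : ℤ => W (k - j) * u j := fun k =>
    (hnorm k).of_norm
  -- transfer the `ℤ²` bound through the shear
  set H : ℤ × ℤ → ℝ := fun p => ‖W (p.1 - p.2)‖ * (‖u p.2‖ * ‖u p.1‖) with hHdef
  have hHG : ∀ p : ℤ × ℤ, Gfun W u (shear p) = H p := by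
    intro p
    simp only [Gfun, shear, Equiv.coe_fn_mk, hHdef]
    rw [show p.2 + (p.1 - p.2) = p.1 by ring]
  have hH : Summable H := (shear.summable_iff.mpr hG).congr hHG
  have hHsum : ∑' p : ℤ × ℤ, H p = ∑' p : ℤ × ℤ, Gfun W u p := by
    rw [← tsum_congr hHG, shear.tsum_eq (Gfun W u)]
  have hHnn : ∀ p : ℤ × ℤ, 0 ≤ H p := fun p => by
    simp only [hHdef]; positivity
  obtain ⟨hrows, hsums⟩ := (summable_prod_of_nonneg hHnn).mp hH
  have hbound : ∀ k : ℤ, ‖conv W u k * (starRingEnd ℂ) (u k)‖ ≤ ∑' j : ℤ, H (k, j) := by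
    intro k
    have h1 : ‖conv W u k‖ ≤ ∑' j : ℤ, ‖W (k - j) * u j‖ :=
      norm_tsum_le_tsum_norm (hnorm k)
    have h2 : (∑' j : ℤ, ‖W (k - j) * u j‖) * ‖u k‖ = ∑' j : ℤ, H (k, j) := by
      rw [← tsum_mul_right]
      apply tsum_congr
      intro j
      simp only [hHdef, norm_mul]; ring
    calc ‖conv W u k * (starRingEnd ℂ) (u k)‖ = ‖conv W u k‖ * ‖u k‖ := by
          rw [norm_mul, RCLike.norm_conj]
      _ ≤ (∑' j : ℤ, ‖W (k - j) * u j‖) * ‖u k‖ :=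
          mul_le_mul_of_nonneg_right h1 (norm_nonneg _)
      _ = ∑' j : ℤ, H (k, j) := h2
  have hc2' : Summable (fun k : ℤ => conv W u k * (starRingEnd ℂ) (u k)) :=
    Summable.of_norm_bounded hsums hbound
  refine ⟨hconv1, hc2', ?_⟩
  have hnrm : Summable fun k : ℤ => ‖conv W u k * (starRingEnd ℂ) (u k)‖ :=
    Summable.of_nonneg_of_le (fun k => norm_nonneg _) hbound hsums
  calc ‖∑' k : ℤ, conv W u k * (starRingEnd ℂ) (u k)‖
      ≤ ∑' k : ℤ, ‖conv W u k * (starRingEnd ℂ) (u k)‖ := norm_tsum_le_tsum_norm hnrm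
    _ ≤ ∑' k : ℤ, ∑' j : ℤ, H (k, j) := Summable.tsum_le_tsum hbound hnrm hsums
    _ = ∑' p : ℤ × ℤ, H p := (Summable.tsum_prod hH).symm
    _ = ∑' p : ℤ × ℤ, Gfun W u p := hHsum


lemma shape_B (φ ψ : ℤ → ℝ) (hφ0 : ∀ l, 0 ≤ φ l) (hψ0 : ∀ j, 0 ≤ ψ j)
    (hφ : Summable φ) (hψ : Summable ψ) :
    Summable (fun p : ℤ × ℤ => φ p.1 * ψ (p.2 + p.1)) ∧
      ∑' p : ℤ × ℤ, φ p.1 * ψ (p.2 + p.1) = (∑' l, φ l) * (∑' j, ψ j) := by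
  have hrows : ∀ l : ℤ, Summable fun j : ℤ => φ l * ψ (j + l) := fun l =>
    (summable_shift hψ l).mul_left (φ l)
  have hsumeq : ∀ l : ℤ, (∑' j : ℤ, φ l * ψ (j + l)) = φ l * ∑' j, ψ j := by
    intro l
    rw [tsum_mul_left, tsum_shift]
  have hsums : Summable fun l : ℤ => ∑' j : ℤ, φ l * ψ (j + l) := by
    apply (hφ.mul_right (∑' j, ψ j)).congr
    intro l; rw [hsumeq]
  have hS : Summable (fun p : ℤ × ℤ => φ p.1 * ψ (p.2 + p.1)) := by
    apply (summable_prod_of_nonneg ?_).mpr ⟨hrows, hsums⟩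
    intro p; exact mul_nonneg (hφ0 _) (hψ0 _)
  refine ⟨hS, ?_⟩
  rw [Summable.tsum_prod hS]
  calc ∑' l, ∑' j, φ l * ψ (j + l) = ∑' l, φ l * ∑' j, ψ j :=
        tsum_congr hsumeq
    _ = (∑' l, φ l) * (∑' j, ψ j) := tsum_mul_right

lemma shape_C (φ ψ : ℤ → ℝ) (hφ0 : ∀ l, 0 ≤ φ l) (hψ0 : ∀ j, 0 ≤ ψ j)
    (hφ : Summable φ) (hψ : Summable ψ) :
    Summable (fun p : ℤ × ℤ => φ p.2 * ψ (p.2 + p.1)) ∧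
      ∑' p : ℤ × ℤ, φ p.2 * ψ (p.2 + p.1) = (∑' l, φ l) * (∑' j, ψ j) := by
  have hrows : ∀ j : ℤ, Summable fun l : ℤ => φ j * ψ (j + l) := by
    intro j
    apply ((summable_shift hψ j).mul_left (φ j)).congr
    intro l; rw [add_comm l j]
  have hsumeq : ∀ j : ℤ, (∑' l : ℤ, φ j * ψ (j + l)) = φ j * ∑' l, ψ l := by
    intro j
    rw [tsum_mul_left]
    congr 1
    rw [← tsum_shift ψ j]
    exact tsum_congr fun l => by rw [add_comm l j]
  have hsums : Summable fun j : ℤ => ∑' l : ℤ, φ j * ψ (j + l) := by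
    apply (hφ.mul_right (∑' l, ψ l)).congr
    intro j; rw [hsumeq]
  have hS' : Summable (fun q : ℤ × ℤ => φ q.1 * ψ (q.1 + q.2)) := by
    apply (summable_prod_of_nonneg ?_).mpr ⟨hrows, hsums⟩
    intro p; exact mul_nonneg (hφ0 _) (hψ0 _)
  have hS : Summable (fun p : ℤ × ℤ => φ p.2 * ψ (p.2 + p.1)) :=
    (Equiv.prodComm ℤ ℤ).summable_iff.mpr hS'
  refine ⟨hS, ?_⟩
  have ht : ∑' p : ℤ × ℤ, φ p.2 * ψ (p.2 + p.1) = ∑' q : ℤ × ℤ, φ q.1 * ψ (q.1 + q.2) :=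
    (Equiv.prodComm ℤ ℤ).tsum_eq (fun q : ℤ × ℤ => φ q.1 * ψ (q.1 + q.2))
  rw [ht, Summable.tsum_prod hS']
  calc ∑' j, ∑' l, φ j * ψ (j + l) = ∑' j, φ j * ∑' l, ψ l := tsum_congr hsumeq
    _ = _ := tsum_mul_right

lemma shape_A (φ ψ : ℤ → ℝ) (hφ0 : ∀ l, 0 ≤ φ l) (hψ0 : ∀ j, 0 ≤ ψ j)
    (hφ : Summable φ) (hψ : Summable ψ) :
    Summable (fun p : ℤ × ℤ => φ p.1 * ψ p.2) ∧
      ∑' p : ℤ × ℤ, φ p.1 * ψ p.2 = (∑' l, φ l) * (∑' j, ψ j) := by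
  have hrows : ∀ l : ℤ, Summable fun j : ℤ => φ l * ψ j := fun l => hψ.mul_left (φ l)
  have hsums : Summable fun l : ℤ => ∑' j : ℤ, φ l * ψ j := by
    apply (hφ.mul_right (∑' j, ψ j)).congr
    intro l; rw [tsum_mul_left]
  have hS : Summable (fun p : ℤ × ℤ => φ p.1 * ψ p.2) := by
    apply (summable_prod_of_nonneg ?_).mpr ⟨hrows, hsums⟩
    intro p; exact mul_nonneg (hφ0 _) (hψ0 _)
  refine ⟨hS, ?_⟩
  rw [Summable.tsum_prod hS]
  calc ∑' l, ∑' j, φ l * ψ j = ∑' l, φ l * ∑' j, ψ j :=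
        tsum_congr fun l => tsum_mul_left
    _ = _ := tsum_mul_right


def Kc (m : ℕ) : ℝ := Real.sqrt (∑' l : ℤ, wtp (-(m : ℝ)) l)

def Cm (m : ℕ) : ℝ := 2 ^ (m + 1) * Kc m

lemma Kc_nonneg (m : ℕ) : 0 ≤ Kc m := Real.sqrt_nonneg _

lemma Cm_nonneg (m : ℕ) : 0 ≤ Cm m := mul_nonneg (by positivity) (Kc_nonneg m)

lemma gpow_le (m : ℕ) (l j : ℤ) : g l ^ m ≤ 2 ^ m * (g j ^ m + g (j + l) ^ m) := by
  have h1 : g l ≤ 2 * max (g j) (g (j + l)) := by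
    have := g_le_add l j
    have h2 := le_max_left (g j) (g (j + l))
    have h3 := le_max_right (g j) (g (j + l))
    linarith
  have h2 : g l ^ m ≤ (2 * max (g j) (g (j + l))) ^ m :=
    pow_le_pow_left₀ (g_pos l).le h1 m
  have h3 : (2 * max (g j) (g (j + l))) ^ m = 2 ^ m * max (g j) (g (j + l)) ^ m :=
    mul_pow 2 _ m
  have h4 : max (g j) (g (j + l)) ^ m ≤ g j ^ m + g (j + l) ^ m := by
    rcases max_cases (g j) (g (j + l)) with ⟨h, _⟩ | ⟨h, _⟩ <;> rw [h]
    · have := (gpow_pos m (j + l)).le; linarith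
    · have := (gpow_pos m j).le; linarith
  calc g l ^ m ≤ 2 ^ m * max (g j) (g (j + l)) ^ m := by rw [← h3]; exact h2
    _ ≤ 2 ^ m * (g j ^ m + g (j + l) ^ m) := by
        have : (0:ℝ) ≤ 2 ^ m := by positivity
        nlinarith

lemma inv_gpow_sq (m : ℕ) (k : ℤ) : ((g k ^ m)⁻¹) ^ 2 = wtp (-(m : ℝ)) k := by
  rw [inv_pow, ← pow_mul, Nat.mul_comm m 2, wtp_neg_eq]

lemma sq_mul_sqrt (b t : ℝ) (ht : 0 ≤ t) : (b * Real.sqrt t) ^ 2 = b ^ 2 * t := by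
  rw [mul_pow, Real.sq_sqrt ht]

lemma Gbound (m : ℕ) (hm : 1 ≤ m) (W u : ℤ → ℂ)
    (hW : Summable fun k : ℤ => wtp (-(m : ℝ)) k * ‖W k‖ ^ 2)
    (hu : Summable fun k : ℤ => wtp (m : ℝ) k * ‖u k‖ ^ 2) :
    Summable (Gfun W u) ∧
      ∑' p : ℤ × ℤ, Gfun W u p ≤
        Cm m * hmnorm m W * ∑' k : ℤ, wtp (m : ℝ) k * ‖u k‖ ^ 2 := by
  have hf2 : Summable fun k : ℤ => (g k ^ m * ‖u k‖) ^ 2 := by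
    apply hu.congr
    intro k
    rw [wtp_eq, mul_pow, ← pow_mul, Nat.mul_comm m 2]
  have hc2 : Summable fun l : ℤ => (‖W l‖ / g l ^ m) ^ 2 := by
    apply hW.congr
    intro l
    rw [wtp_neg_eq, div_pow, ← pow_mul, Nat.mul_comm m 2, div_eq_mul_inv, mul_comm]
  have hF2eq : (∑' k : ℤ, (g k ^ m * ‖u k‖) ^ 2) = ∑' k : ℤ, wtp (m : ℝ) k * ‖u k‖ ^ 2 := by
    apply tsum_congr; intro k
    rw [wtp_eq, mul_pow, ← pow_mul, Nat.mul_comm m 2]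
  have hC2eq : (∑' l : ℤ, (‖W l‖ / g l ^ m) ^ 2) = ∑' l : ℤ, wtp (-(m : ℝ)) l * ‖W l‖ ^ 2 := by
    apply tsum_congr; intro l
    rw [wtp_neg_eq, div_pow, ← pow_mul, Nat.mul_comm m 2, div_eq_mul_inv, mul_comm]
  set F2 : ℝ := ∑' k : ℤ, (g k ^ m * ‖u k‖) ^ 2 with hF2def
  set C2 : ℝ := ∑' l : ℤ, (‖W l‖ / g l ^ m) ^ 2 with hC2def
  have hF2nn : 0 ≤ F2 := tsum_nonneg fun k => sq_nonneg _
  have hC2nn : 0 ≤ C2 := tsum_nonneg fun l => sq_nonneg _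
  -- ℓ¹ bound on ‖u‖
  have hinv2 : Summable fun k : ℤ => ((g k ^ m)⁻¹) ^ 2 :=
    (summable_wtp_neg m hm).congr fun k => (inv_gpow_sq m k).symm
  have hCSa := tsum_cs (fun k => (g k ^ m)⁻¹) (fun k => g k ^ m * ‖u k‖)
    (fun k => inv_nonneg.mpr (gpow_pos m k).le)
    (fun k => mul_nonneg (gpow_pos m k).le (norm_nonneg _)) hinv2 hf2
  have haeq : ∀ k : ℤ, (g k ^ m)⁻¹ * (g k ^ m * ‖u k‖) = ‖u k‖ := by
    intro k
    rw [← mul_assoc, inv_mul_cancel₀ (ne_of_gt (gpow_pos m k)), one_mul]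
  have hSa : Summable fun k : ℤ => ‖u k‖ := hCSa.1.congr haeq
  have hA1 : (∑' k : ℤ, ‖u k‖) ≤ Kc m * Real.sqrt F2 := by
    have h1 : (∑' k : ℤ, ‖u k‖) = ∑' k : ℤ, (g k ^ m)⁻¹ * (g k ^ m * ‖u k‖) :=
      (tsum_congr haeq).symm
    have h2 : Real.sqrt (∑' k : ℤ, ((g k ^ m)⁻¹) ^ 2) = Kc m := by
      unfold Kc
      congr 1
      exact tsum_congr fun k => inv_gpow_sq m k
    rw [h1]
    calc _ ≤ _ := hCSa.2
      _ = Kc m * Real.sqrt F2 := by rw [h2]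
  set A1 : ℝ := ∑' k : ℤ, ‖u k‖ with hA1def
  have hA1nn : 0 ≤ A1 := tsum_nonneg fun k => norm_nonneg _
  -- first CS term
  have hx1 : Summable fun p : ℤ × ℤ => (‖W p.1‖ / g p.1 ^ m * Real.sqrt ‖u (p.2 + p.1)‖) ^ 2 := by
    apply ((shape_B (fun l => (‖W l‖ / g l ^ m) ^ 2) (fun k => ‖u k‖)
      (fun l => sq_nonneg _) (fun k => norm_nonneg _) hc2 hSa).1).congr
    intro p
    rw [sq_mul_sqrt _ _ (norm_nonneg _)]
  have hx1t : (∑' p : ℤ × ℤ, (‖W p.1‖ / g p.1 ^ m * Real.sqrt ‖u (p.2 + p.1)‖) ^ 2) = C2 * A1 := by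
    rw [← (shape_B (fun l => (‖W l‖ / g l ^ m) ^ 2) (fun k => ‖u k‖)
      (fun l => sq_nonneg _) (fun k => norm_nonneg _) hc2 hSa).2]
    apply tsum_congr; intro p
    rw [sq_mul_sqrt _ _ (norm_nonneg _)]
  have hy1 : Summable fun p : ℤ × ℤ => (g p.2 ^ m * ‖u p.2‖ * Real.sqrt ‖u (p.2 + p.1)‖) ^ 2 := by
    apply ((shape_C (fun j => (g j ^ m * ‖u j‖) ^ 2) (fun k => ‖u k‖)
      (fun j => sq_nonneg _) (fun k => norm_nonneg _) hf2 hSa).1).congr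
    intro p
    rw [sq_mul_sqrt _ _ (norm_nonneg _)]
  have hy1t : (∑' p : ℤ × ℤ, (g p.2 ^ m * ‖u p.2‖ * Real.sqrt ‖u (p.2 + p.1)‖) ^ 2) = F2 * A1 := by
    rw [← (shape_C (fun j => (g j ^ m * ‖u j‖) ^ 2) (fun k => ‖u k‖)
      (fun j => sq_nonneg _) (fun k => norm_nonneg _) hf2 hSa).2]
    apply tsum_congr; intro p
    rw [sq_mul_sqrt _ _ (norm_nonneg _)]
  have hCS1 := tsum_cs (fun p : ℤ × ℤ => ‖W p.1‖ / g p.1 ^ m * Real.sqrt ‖u (p.2 + p.1)‖)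
    (fun p : ℤ × ℤ => g p.2 ^ m * ‖u p.2‖ * Real.sqrt ‖u (p.2 + p.1)‖)
    (fun p => mul_nonneg (div_nonneg (norm_nonneg _) (gpow_pos m _).le) (Real.sqrt_nonneg _))
    (fun p => mul_nonneg (mul_nonneg (gpow_pos m _).le (norm_nonneg _)) (Real.sqrt_nonneg _))
    hx1 hy1
  have hT1eq : ∀ p : ℤ × ℤ,
      (‖W p.1‖ / g p.1 ^ m * Real.sqrt ‖u (p.2 + p.1)‖) *
        (g p.2 ^ m * ‖u p.2‖ * Real.sqrt ‖u (p.2 + p.1)‖) =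
      ‖W p.1‖ / g p.1 ^ m * (g p.2 ^ m * ‖u p.2‖) * ‖u (p.2 + p.1)‖ := by
    intro p
    have h := Real.mul_self_sqrt (norm_nonneg (u (p.2 + p.1)))
    calc ‖W p.1‖ / g p.1 ^ m * Real.sqrt ‖u (p.2 + p.1)‖ *
          (g p.2 ^ m * ‖u p.2‖ * Real.sqrt ‖u (p.2 + p.1)‖)
        = ‖W p.1‖ / g p.1 ^ m * (g p.2 ^ m * ‖u p.2‖) *
          (Real.sqrt ‖u (p.2 + p.1)‖ * Real.sqrt ‖u (p.2 + p.1)‖) := by ring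
      _ = _ := by rw [h]
  have hS1 : Summable fun p : ℤ × ℤ =>
      ‖W p.1‖ / g p.1 ^ m * (g p.2 ^ m * ‖u p.2‖) * ‖u (p.2 + p.1)‖ :=
    hCS1.1.congr hT1eq
  have hS1t : (∑' p : ℤ × ℤ, ‖W p.1‖ / g p.1 ^ m * (g p.2 ^ m * ‖u p.2‖) * ‖u (p.2 + p.1)‖)
      ≤ Real.sqrt (C2 * A1) * Real.sqrt (F2 * A1) := by
    rw [← tsum_congr hT1eq]
    calc _ ≤ _ := hCS1.2
      _ = _ := by rw [hx1t, hy1t]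
  -- second CS term
  have hx2 : Summable fun p : ℤ × ℤ => (‖W p.1‖ / g p.1 ^ m * Real.sqrt ‖u p.2‖) ^ 2 := by
    apply ((shape_A (fun l => (‖W l‖ / g l ^ m) ^ 2) (fun k => ‖u k‖)
      (fun l => sq_nonneg _) (fun k => norm_nonneg _) hc2 hSa).1).congr
    intro p
    rw [sq_mul_sqrt _ _ (norm_nonneg _)]
  have hx2t : (∑' p : ℤ × ℤ, (‖W p.1‖ / g p.1 ^ m * Real.sqrt ‖u p.2‖) ^ 2) = C2 * A1 := by
    rw [← (shape_A (fun l => (‖W l‖ / g l ^ m) ^ 2) (fun k => ‖u k‖)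
      (fun l => sq_nonneg _) (fun k => norm_nonneg _) hc2 hSa).2]
    apply tsum_congr; intro p
    rw [sq_mul_sqrt _ _ (norm_nonneg _)]
  have hy2 : Summable fun p : ℤ × ℤ =>
      (g (p.2 + p.1) ^ m * ‖u (p.2 + p.1)‖ * Real.sqrt ‖u p.2‖) ^ 2 := by
    apply ((shape_C (fun j => ‖u j‖) (fun k => (g k ^ m * ‖u k‖) ^ 2)
      (fun j => norm_nonneg _) (fun k => sq_nonneg _) hSa hf2).1).congr
    intro p
    rw [sq_mul_sqrt _ _ (norm_nonneg _)]; ring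
  have hy2t : (∑' p : ℤ × ℤ, (g (p.2 + p.1) ^ m * ‖u (p.2 + p.1)‖ * Real.sqrt ‖u p.2‖) ^ 2)
      = F2 * A1 := by
    rw [show F2 * A1 = A1 * F2 from mul_comm _ _]
    rw [← (shape_C (fun j => ‖u j‖) (fun k => (g k ^ m * ‖u k‖) ^ 2)
      (fun j => norm_nonneg _) (fun k => sq_nonneg _) hSa hf2).2]
    apply tsum_congr; intro p
    rw [sq_mul_sqrt _ _ (norm_nonneg _)]; ring
  have hCS2 := tsum_cs (fun p : ℤ × ℤ => ‖W p.1‖ / g p.1 ^ m * Real.sqrt ‖u p.2‖)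
    (fun p : ℤ × ℤ => g (p.2 + p.1) ^ m * ‖u (p.2 + p.1)‖ * Real.sqrt ‖u p.2‖)
    (fun p => mul_nonneg (div_nonneg (norm_nonneg _) (gpow_pos m _).le) (Real.sqrt_nonneg _))
    (fun p => mul_nonneg (mul_nonneg (gpow_pos m _).le (norm_nonneg _)) (Real.sqrt_nonneg _))
    hx2 hy2
  have hT2eq : ∀ p : ℤ × ℤ,
      (‖W p.1‖ / g p.1 ^ m * Real.sqrt ‖u p.2‖) *
        (g (p.2 + p.1) ^ m * ‖u (p.2 + p.1)‖ * Real.sqrt ‖u p.2‖) =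
      ‖W p.1‖ / g p.1 ^ m * (g (p.2 + p.1) ^ m * ‖u (p.2 + p.1)‖) * ‖u p.2‖ := by
    intro p
    have h := Real.mul_self_sqrt (norm_nonneg (u p.2))
    calc ‖W p.1‖ / g p.1 ^ m * Real.sqrt ‖u p.2‖ *
          (g (p.2 + p.1) ^ m * ‖u (p.2 + p.1)‖ * Real.sqrt ‖u p.2‖)
        = ‖W p.1‖ / g p.1 ^ m * (g (p.2 + p.1) ^ m * ‖u (p.2 + p.1)‖) *
          (Real.sqrt ‖u p.2‖ * Real.sqrt ‖u p.2‖) := by ring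
      _ = _ := by rw [h]
  have hS2 : Summable fun p : ℤ × ℤ =>
      ‖W p.1‖ / g p.1 ^ m * (g (p.2 + p.1) ^ m * ‖u (p.2 + p.1)‖) * ‖u p.2‖ :=
    hCS2.1.congr hT2eq
  have hS2t : (∑' p : ℤ × ℤ, ‖W p.1‖ / g p.1 ^ m * (g (p.2 + p.1) ^ m * ‖u (p.2 + p.1)‖) * ‖u p.2‖)
      ≤ Real.sqrt (C2 * A1) * Real.sqrt (F2 * A1) := by
    rw [← tsum_congr hT2eq]
    calc _ ≤ _ := hCS2.2
      _ = _ := by rw [hx2t, hy2t]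
  -- pointwise domination of `Gfun`
  have hdom : ∀ p : ℤ × ℤ, Gfun W u p ≤ 2 ^ m *
      (‖W p.1‖ / g p.1 ^ m * (g p.2 ^ m * ‖u p.2‖) * ‖u (p.2 + p.1)‖ +
       ‖W p.1‖ / g p.1 ^ m * (g (p.2 + p.1) ^ m * ‖u (p.2 + p.1)‖) * ‖u p.2‖) := by
    intro p
    obtain ⟨l, j⟩ := p
    simp only [Gfun]
    have e : ‖W l‖ = g l ^ m * (‖W l‖ / g l ^ m) := by
      field_simp
      exact (mul_div_cancel_right₀ _ (ne_of_gt (gpow_pos m _))).symm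
    have hp := gpow_le m l j
    have hcnn : 0 ≤ ‖W l‖ / g l ^ m := div_nonneg (norm_nonneg _) (gpow_pos m _).le
    have hmul := mul_le_mul_of_nonneg_right hp
      (mul_nonneg hcnn (mul_nonneg (norm_nonneg (u j)) (norm_nonneg (u (j + l)))))
    calc ‖W l‖ * (‖u j‖ * ‖u (j + l)‖)
        = g l ^ m * (‖W l‖ / g l ^ m * (‖u j‖ * ‖u (j + l)‖)) := by
          conv_lhs => rw [e]
          ring
      _ ≤ 2 ^ m * (g j ^ m + g (j + l) ^ m) *
          (‖W l‖ / g l ^ m * (‖u j‖ * ‖u (j + l)‖)) := hmul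
      _ = 2 ^ m * (‖W l‖ / g l ^ m * (g j ^ m * ‖u j‖) * ‖u (j + l)‖ +
          ‖W l‖ / g l ^ m * (g (j + l) ^ m * ‖u (j + l)‖) * ‖u j‖) := by ring
  -- combine
  have hmaj : Summable fun p : ℤ × ℤ => 2 ^ m *
      (‖W p.1‖ / g p.1 ^ m * (g p.2 ^ m * ‖u p.2‖) * ‖u (p.2 + p.1)‖ +
       ‖W p.1‖ / g p.1 ^ m * (g (p.2 + p.1) ^ m * ‖u (p.2 + p.1)‖) * ‖u p.2‖) :=
    ((hS1.add hS2).mul_left _)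
  have hGsum : Summable (Gfun W u) :=
    Summable.of_nonneg_of_le (Gfun_nonneg W u) hdom hmaj
  refine ⟨hGsum, ?_⟩
  have step1 : (∑' p : ℤ × ℤ, Gfun W u p) ≤
      2 ^ m * (2 * (Real.sqrt (C2 * A1) * Real.sqrt (F2 * A1))) := by
    calc (∑' p : ℤ × ℤ, Gfun W u p) ≤ ∑' p : ℤ × ℤ, 2 ^ m *
        (‖W p.1‖ / g p.1 ^ m * (g p.2 ^ m * ‖u p.2‖) * ‖u (p.2 + p.1)‖ +
         ‖W p.1‖ / g p.1 ^ m * (g (p.2 + p.1) ^ m * ‖u (p.2 + p.1)‖) * ‖u p.2‖) :=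
        Summable.tsum_le_tsum hdom hGsum hmaj
      _ = 2 ^ m * ((∑' p : ℤ × ℤ,
            ‖W p.1‖ / g p.1 ^ m * (g p.2 ^ m * ‖u p.2‖) * ‖u (p.2 + p.1)‖) +
          (∑' p : ℤ × ℤ,
            ‖W p.1‖ / g p.1 ^ m * (g (p.2 + p.1) ^ m * ‖u (p.2 + p.1)‖) * ‖u p.2‖)) := by
          rw [tsum_mul_left, Summable.tsum_add hS1 hS2]
      _ ≤ 2 ^ m * (2 * (Real.sqrt (C2 * A1) * Real.sqrt (F2 * A1))) := by
          have h2m : (0:ℝ) ≤ 2 ^ m := by positivity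
          nlinarith [hS1t, hS2t]
  have hsqrt : Real.sqrt (C2 * A1) * Real.sqrt (F2 * A1) =
      Real.sqrt C2 * Real.sqrt F2 * A1 := by
    have h : Real.sqrt A1 * Real.sqrt A1 = A1 := Real.mul_self_sqrt hA1nn
    calc Real.sqrt (C2 * A1) * Real.sqrt (F2 * A1)
        = (Real.sqrt C2 * Real.sqrt A1) * (Real.sqrt F2 * Real.sqrt A1) := by
          rw [Real.sqrt_mul hC2nn, Real.sqrt_mul hF2nn]
      _ = Real.sqrt C2 * Real.sqrt F2 * (Real.sqrt A1 * Real.sqrt A1) := by ring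
      _ = Real.sqrt C2 * Real.sqrt F2 * A1 := by rw [h]
  have hhm : Real.sqrt C2 = hmnorm m W := by
    unfold hmnorm
    rw [← hC2eq, Real.sqrt_eq_rpow]
  have hsq : 0 ≤ Real.sqrt C2 * Real.sqrt F2 := by positivity
  calc (∑' p : ℤ × ℤ, Gfun W u p)
      ≤ 2 ^ m * (2 * (Real.sqrt C2 * Real.sqrt F2 * A1)) := by rw [← hsqrt]; exact step1
    _ ≤ 2 ^ m * (2 * (Real.sqrt C2 * Real.sqrt F2 * (Kc m * Real.sqrt F2))) := by
        have h2m : (0:ℝ) ≤ 2 ^ m := by positivity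
        nlinarith [mul_le_mul_of_nonneg_left hA1 hsq]
    _ = Cm m * Real.sqrt C2 * (Real.sqrt F2 * Real.sqrt F2) := by rw [Cm]; ring
    _ = Cm m * hmnorm m W * F2 := by rw [Real.mul_self_sqrt hF2nn, hhm]
    _ = Cm m * hmnorm m W * ∑' k : ℤ, wtp (m : ℝ) k * ‖u k‖ ^ 2 := by rw [hF2eq]


lemma one_le_wtp (m : ℕ) (k : ℤ) : 1 ≤ wtp (m : ℝ) k := by
  rw [wtp_eq]; exact one_le_gpow (2 * m) k

lemma summable_a2 (m : ℕ) (u : ℤ → ℂ)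
    (hu : Summable fun k : ℤ => wtp (m : ℝ) k * ‖u k‖ ^ 2) :
    Summable fun k : ℤ => ‖u k‖ ^ 2 := by
  apply Summable.of_nonneg_of_le (fun k => sq_nonneg _) (fun k => ?_) hu
  exact le_mul_of_one_le_left (sq_nonneg _) (one_le_wtp m k)

lemma rho_fact (u : ℤ → ℂ) (hSa2 : Summable fun k : ℤ => ‖u k‖ ^ 2) (l : ℤ) :
    Summable (fun j : ℤ => ‖u j‖ * ‖u (j + l)‖) ∧
      ∑' j : ℤ, ‖u j‖ * ‖u (j + l)‖ ≤ ∑' k : ℤ, ‖u k‖ ^ 2 := by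
  have hsh : Summable fun j : ℤ => ‖u (j + l)‖ ^ 2 :=
    summable_shift hSa2 l
  have hCS := tsum_cs (fun j => ‖u j‖) (fun j => ‖u (j + l)‖)
    (fun j => norm_nonneg _) (fun j => norm_nonneg _) hSa2 hsh
  refine ⟨hCS.1, ?_⟩
  calc ∑' j : ℤ, ‖u j‖ * ‖u (j + l)‖
      ≤ Real.sqrt (∑' j : ℤ, ‖u j‖ ^ 2) * Real.sqrt (∑' j : ℤ, ‖u (j + l)‖ ^ 2) := hCS.2
    _ = Real.sqrt (∑' j : ℤ, ‖u j‖ ^ 2) * Real.sqrt (∑' j : ℤ, ‖u j‖ ^ 2) := by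
        rw [tsum_shift (fun j => ‖u j‖ ^ 2) l]
    _ = ∑' k : ℤ, ‖u k‖ ^ 2 :=
        Real.mul_self_sqrt (tsum_nonneg fun k => sq_nonneg _)

lemma G0bound (V u : ℤ → ℂ) (T : Finset ℤ)
    (hSa2 : Summable fun k : ℤ => ‖u k‖ ^ 2) :
    Summable (Gfun (fun l => if l ∈ T then V l else 0) u) ∧
      ∑' p : ℤ × ℤ, Gfun (fun l => if l ∈ T then V l else 0) u p ≤
        (∑ l ∈ T, ‖V l‖) * ∑' k : ℤ, ‖u k‖ ^ 2 := by
  classical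
  set V₀ : ℤ → ℂ := fun l => if l ∈ T then V l else 0 with hV₀
  have hnn : ∀ p : ℤ × ℤ, 0 ≤ Gfun V₀ u p := Gfun_nonneg V₀ u
  have hrows : ∀ l : ℤ, Summable fun j : ℤ => Gfun V₀ u (l, j) := by
    intro l
    have := (rho_fact u hSa2 l).1.mul_left ‖V₀ l‖
    exact this.congr fun j => rfl
  have hrowsum : ∀ l : ℤ, (∑' j : ℤ, Gfun V₀ u (l, j)) =
      ‖V₀ l‖ * ∑' j : ℤ, ‖u j‖ * ‖u (j + l)‖ := by
    intro l
    rw [← tsum_mul_left]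
    rfl
  have hzero : ∀ l : ℤ, l ∉ T → (∑' j : ℤ, Gfun V₀ u (l, j)) = 0 := by
    intro l hl
    rw [hrowsum l]
    simp [hV₀, if_neg hl]
  have hsums : Summable fun l : ℤ => ∑' j : ℤ, Gfun V₀ u (l, j) :=
    summable_of_ne_finset_zero hzero
  have hG : Summable (Gfun V₀ u) := by
    apply (summable_prod_of_nonneg hnn).mpr ⟨hrows, hsums⟩
  refine ⟨hG, ?_⟩
  rw [Summable.tsum_prod hG]
  rw [tsum_eq_sum (s := T) hzero]
  calc ∑ l ∈ T, ∑' j : ℤ, Gfun V₀ u (l, j)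
      ≤ ∑ l ∈ T, ‖V l‖ * ∑' k : ℤ, ‖u k‖ ^ 2 := by
        apply Finset.sum_le_sum
        intro l hl
        rw [hrowsum l]
        have h1 : ‖V₀ l‖ = ‖V l‖ := by rw [hV₀]; simp [if_pos hl]
        rw [h1]
        exact mul_le_mul_of_nonneg_left (rho_fact u hSa2 l).2 (norm_nonneg _)
    _ = (∑ l ∈ T, ‖V l‖) * ∑' k : ℤ, ‖u k‖ ^ 2 := by rw [Finset.sum_mul]

lemma pi_facts (m : ℕ) (hm : 1 ≤ m) (k : ℤ) :
    (0 ≤ (2 * Real.pi * (k : ℝ)) ^ (2 * m)) ∧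
    ((2 * Real.pi * (k : ℝ)) ^ (2 * m) ≤ Real.pi ^ (2 * m) * wtp (m : ℝ) k) ∧
    (wtp (m : ℝ) k ≤ 1 + (2 * Real.pi * (k : ℝ)) ^ (2 * m)) := by
  have hpi := Real.pi_gt_three
  have habs : |2 * Real.pi * (k : ℝ)| = 2 * Real.pi * |(k : ℝ)| := by
    rw [abs_mul, _root_.abs_of_nonneg (by positivity : (0:ℝ) ≤ 2 * Real.pi)]
  have hev : |2 * Real.pi * (k : ℝ)| ^ (2 * m) = (2 * Real.pi * (k : ℝ)) ^ (2 * m) :=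
    Even.pow_abs (even_two_mul m) _
  have h0 : 0 ≤ (2 * Real.pi * (k : ℝ)) ^ (2 * m) := by
    rw [← hev]; positivity
  refine ⟨h0, ?_, ?_⟩
  · -- upper bound by the weight
    have h1 : |2 * Real.pi * (k : ℝ)| ≤ Real.pi * g k := by
      rw [habs, g_cast]
      have : |2 * (k : ℝ)| = 2 * |(k : ℝ)| := by rw [abs_mul]; norm_num
      rw [this]
      nlinarith [abs_nonneg ((k : ℝ))]
    calc (2 * Real.pi * (k : ℝ)) ^ (2 * m) = |2 * Real.pi * (k : ℝ)| ^ (2 * m) := hev.symm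
      _ ≤ (Real.pi * g k) ^ (2 * m) := pow_le_pow_left₀ (abs_nonneg _) h1 _
      _ = Real.pi ^ (2 * m) * g k ^ (2 * m) := mul_pow _ _ _
      _ = Real.pi ^ (2 * m) * wtp (m : ℝ) k := by rw [wtp_eq]
  · -- lower bound
    rcases eq_or_ne k 0 with rfl | hk
    · rw [wtp_eq]
      have : g (0 : ℤ) = 1 := by rw [g_cast]; norm_num
      rw [this, one_pow]
      linarith [h0]
    · have hk1 : (1 : ℝ) ≤ |(k : ℝ)| := by
        rw [show |(k : ℝ)| = ((|k| : ℤ) : ℝ) by push_cast; rfl]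
        exact_mod_cast Int.one_le_abs (by exact_mod_cast hk)
      have h1 : g k ≤ |2 * Real.pi * (k : ℝ)| := by
        rw [habs, g_cast]
        have : |2 * (k : ℝ)| = 2 * |(k : ℝ)| := by rw [abs_mul]; norm_num
        rw [this]
        nlinarith
      calc wtp (m : ℝ) k = g k ^ (2 * m) := wtp_eq m k
        _ ≤ |2 * Real.pi * (k : ℝ)| ^ (2 * m) :=
            pow_le_pow_left₀ (g_pos k).le h1 _
        _ = (2 * Real.pi * (k : ℝ)) ^ (2 * m) := hev
        _ ≤ 1 + (2 * Real.pi * (k : ℝ)) ^ (2 * m) := by linarith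

lemma summable_D (m : ℕ) (hm : 1 ≤ m) (u : ℤ → ℂ)
    (hu : Summable fun k : ℤ => wtp (m : ℝ) k * ‖u k‖ ^ 2) :
    Summable fun k : ℤ => (2 * Real.pi * (k : ℝ)) ^ (2 * m) * ‖u k‖ ^ 2 := by
  apply Summable.of_nonneg_of_le
    (fun k => mul_nonneg (pi_facts m hm k).1 (sq_nonneg _))
    (fun k => ?_) (hu.mul_left (Real.pi ^ (2 * m)))
  calc (2 * Real.pi * (k : ℝ)) ^ (2 * m) * ‖u k‖ ^ 2
      ≤ Real.pi ^ (2 * m) * wtp (m : ℝ) k * ‖u k‖ ^ 2 :=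
        mul_le_mul_of_nonneg_right (pi_facts m hm k).2.1 (sq_nonneg _)
    _ = Real.pi ^ (2 * m) * (wtp (m : ℝ) k * ‖u k‖ ^ 2) := by ring

lemma N_le (m : ℕ) (hm : 1 ≤ m) (u : ℤ → ℂ)
    (hu : Summable fun k : ℤ => wtp (m : ℝ) k * ‖u k‖ ^ 2) :
    (∑' k : ℤ, wtp (m : ℝ) k * ‖u k‖ ^ 2) ≤ (∑' k : ℤ, ‖u k‖ ^ 2) +
      ∑' k : ℤ, (2 * Real.pi * (k : ℝ)) ^ (2 * m) * ‖u k‖ ^ 2 := by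
  have hSa2 := summable_a2 m u hu
  have hD := summable_D m hm u hu
  calc (∑' k : ℤ, wtp (m : ℝ) k * ‖u k‖ ^ 2)
      ≤ ∑' k : ℤ, (‖u k‖ ^ 2 + (2 * Real.pi * (k : ℝ)) ^ (2 * m) * ‖u k‖ ^ 2) := by
        apply Summable.tsum_le_tsum ?_ hu (hSa2.add hD)
        intro k
        have := (pi_facts m hm k).2.2
        nlinarith [sq_nonneg ‖u k‖]
    _ = _ := Summable.tsum_add hSa2 hD

lemma tail_choice (m : ℕ) (V : ℤ → ℂ)
    (hV : Summable fun k : ℤ => wtp (-(m : ℝ)) k * ‖V k‖ ^ 2)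
    {δ : ℝ} (hδ : 0 < δ) :
    ∃ T : Finset ℤ,
      (∑' k : ℤ, wtp (-(m : ℝ)) k * ‖(if k ∈ T then (0:ℂ) else V k)‖ ^ 2) < δ := by
  classical
  have htend := tendsto_tsum_compl_atTop_zero (fun k : ℤ => wtp (-(m : ℝ)) k * ‖V k‖ ^ 2)
  have hev := (tendsto_order.1 htend).2 δ hδ
  obtain ⟨T, hT⟩ := hev.exists
  refine ⟨T, ?_⟩
  have hsupp : Function.support
      (fun k : ℤ => wtp (-(m : ℝ)) k * ‖(if k ∈ T then (0:ℂ) else V k)‖ ^ 2) ⊆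
      {x : ℤ | x ∉ T} := by
    intro k hk
    simp only [Function.mem_support] at hk
    intro hkT
    apply hk
    simp [if_pos hkT]
  have h1 : (∑' k : ℤ, wtp (-(m : ℝ)) k * ‖(if k ∈ T then (0:ℂ) else V k)‖ ^ 2) =
      ∑' x : {x : ℤ | x ∉ T},
        wtp (-(m : ℝ)) (x : ℤ) * ‖(if (x : ℤ) ∈ T then (0:ℂ) else V (x : ℤ))‖ ^ 2 :=
    (tsum_subtype_eq_of_support_subset hsupp).symm
  have h2 : (∑' x : {x : ℤ | x ∉ T},
        wtp (-(m : ℝ)) (x : ℤ) * ‖(if (x : ℤ) ∈ T then (0:ℂ) else V (x : ℤ))‖ ^ 2) =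
      ∑' x : {x : ℤ // x ∉ T}, wtp (-(m : ℝ)) (x : ℤ) * ‖V (x : ℤ)‖ ^ 2 := by
    apply tsum_congr
    intro b
    rw [if_neg b.2]
  rw [h1, h2]
  exact hT

end FC

lemma wtp_nonneg (s : ℝ) (k : ℤ) : 0 ≤ wtp s k := Real.rpow_nonneg (FC.g_pos k).le _

/-- The quadratic form `t₊[u] = ⟨D₊^{2m}u,u⟩₊ + ⟨Wu,u⟩₊`. -/
def tform (m : ℕ) (W u : ℤ → ℂ) : ℂ :=
  (∑' k : ℤ, ((2 * Real.pi * (k : ℝ)) ^ (2 * m) * ‖u k‖ ^ 2 : ℝ)) +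
    ∑' k : ℤ, conv W u k * (starRingEnd ℂ) (u k)

open FC in
theorem form_convergence (m : ℕ) (hm : 1 ≤ m) (V : ℤ → ℂ) (Vn : ℕ → ℤ → ℂ)
    (hV : Summable fun k : ℤ => wtp (-(m : ℝ)) k * ‖V k‖ ^ 2)
    (hVn : ∀ n, Summable fun k : ℤ => wtp (-(m : ℝ)) k * ‖Vn n k‖ ^ 2)
    (hconv : Tendsto (fun n => hmnorm m (fun k => Vn n k - V k)) atTop (nhds 0)) :
    ∃ a b : ℕ → ℝ, (∀ n, 0 ≤ a n) ∧ (∀ n, 0 ≤ b n) ∧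
      Tendsto a atTop (nhds 0) ∧ Tendsto b atTop (nhds 0) ∧
      ∀ n, ∀ u : ℤ → ℂ, (Summable fun k : ℤ => wtp (m : ℝ) k * ‖u k‖ ^ 2) →
        ‖tform m (Vn n) u - tform m V u‖ ≤
          a n * (∑' k : ℤ, ‖u k‖ ^ 2) + b n * (tform m V u).re := by
  classical
  set ε : ℕ → ℝ := fun n => hmnorm m (fun k => Vn n k - V k) with hεdef
  have hεnn : ∀ n, 0 ≤ ε n := fun n =>
    Real.rpow_nonneg (tsum_nonneg fun k => mul_nonneg (wtp_nonneg _ _) (sq_nonneg _)) _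
  have hδpos : 0 < (2 * (Cm m + 1))⁻¹ := by
    have := Cm_nonneg m; positivity
  set δ : ℝ := (2 * (Cm m + 1))⁻¹ with hδdef
  have hCδ : Cm m * δ ≤ 1 / 2 := by
    have h2 : (0:ℝ) < 2 * (Cm m + 1) := by have := Cm_nonneg m; positivity
    rw [hδdef]
    rw [show Cm m * (2 * (Cm m + 1))⁻¹ = Cm m / (2 * (Cm m + 1)) by rw [div_eq_mul_inv]]
    rw [div_le_iff₀ h2]
    nlinarith [Cm_nonneg m]
  obtain ⟨T, hT⟩ := tail_choice m V hV (show 0 < δ ^ 2 by positivity)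
  set M : ℝ := ∑ l ∈ T, ‖V l‖ with hMdef
  have hMnn : 0 ≤ M := Finset.sum_nonneg fun l _ => norm_nonneg _
  refine ⟨fun n => ((2 * M + 2) * Cm m) * ε n, fun n => (2 * Cm m) * ε n,
    ?_, ?_, ?_, ?_, ?_⟩
  · intro n
    exact mul_nonneg (mul_nonneg (by linarith) (Cm_nonneg m)) (hεnn n)
  · intro n
    exact mul_nonneg (by nlinarith [Cm_nonneg m]) (hεnn n)
  · simpa using hconv.const_mul ((2 * M + 2) * Cm m)
  · simpa using hconv.const_mul (2 * Cm m)
  intro n u hu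
  set W : ℤ → ℂ := fun k => Vn n k - V k with hWdef
  set V₀ : ℤ → ℂ := fun l => if l ∈ T then V l else 0 with hV₀def
  set V₁ : ℤ → ℂ := fun l => if l ∈ T then 0 else V l with hV₁def
  have hVsplit : ∀ k, V k = V₀ k + V₁ k := by
    intro k
    rw [hV₀def, hV₁def]
    by_cases h : k ∈ T <;> simp [h]
  have hSa2 := summable_a2 m u hu
  have hWsum : Summable fun k : ℤ => wtp (-(m : ℝ)) k * ‖W k‖ ^ 2 := by
    apply Summable.of_nonneg_of_le
      (fun k => mul_nonneg (wtp_nonneg _ _) (sq_nonneg _)) (fun k => ?_)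
      (((hVn n).add hV).mul_left 2)
    have h1 : ‖W k‖ ≤ ‖Vn n k‖ + ‖V k‖ := by rw [hWdef]; exact norm_sub_le _ _
    have h2 : ‖W k‖ ^ 2 ≤ 2 * (‖Vn n k‖ ^ 2 + ‖V k‖ ^ 2) := by
      nlinarith [h1, norm_nonneg (W k), sq_nonneg (‖Vn n k‖ - ‖V k‖)]
    calc wtp (-(m : ℝ)) k * ‖W k‖ ^ 2
        ≤ wtp (-(m : ℝ)) k * (2 * (‖Vn n k‖ ^ 2 + ‖V k‖ ^ 2)) :=
          mul_le_mul_of_nonneg_left h2 (wtp_nonneg _ _)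
      _ = 2 * (wtp (-(m : ℝ)) k * ‖Vn n k‖ ^ 2 + wtp (-(m : ℝ)) k * ‖V k‖ ^ 2) := by ring
  have hV₀sum : Summable fun k : ℤ => wtp (-(m : ℝ)) k * ‖V₀ k‖ ^ 2 := by
    apply summable_of_ne_finset_zero (s := T)
    intro k hk
    rw [hV₀def]
    simp [if_neg hk]
  have hV₁sum : Summable fun k : ℤ => wtp (-(m : ℝ)) k * ‖V₁ k‖ ^ 2 := by
    apply Summable.of_nonneg_of_le
      (fun k => mul_nonneg (wtp_nonneg _ _) (sq_nonneg _)) (fun k => ?_) hV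
    rw [hV₁def]
    by_cases h : k ∈ T
    · simp only [if_pos h, norm_zero]
      have := mul_nonneg (wtp_nonneg (-(m:ℝ)) k) (sq_nonneg ‖V k‖)
      simpa using this
    · simp [if_neg h]
  obtain ⟨hGW, hGWt⟩ := Gbound m hm W u hWsum hu
  obtain ⟨hc1W, hc2W, hc3W⟩ := pipeline m W u hWsum hu hGW
  obtain ⟨hGVn', hGVnt⟩ := Gbound m hm (Vn n) u (hVn n) hu
  obtain ⟨hc1Vn, hc2Vn, _⟩ := pipeline m (Vn n) u (hVn n) hu hGVn'
  obtain ⟨hGV1, hGV1t⟩ := Gbound m hm V₁ u hV₁sum hu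
  obtain ⟨hc1V1, hc2V1, hc3V1⟩ := pipeline m V₁ u hV₁sum hu hGV1
  obtain ⟨hGV0, hGV0t⟩ := G0bound V u T hSa2
  obtain ⟨hc1V0, hc2V0, hc3V0⟩ := pipeline m V₀ u hV₀sum hu hGV0
  have hc1V : ∀ k, Summable fun j : ℤ => V (k - j) * u j := by
    intro k
    apply ((hc1V0 k).add (hc1V1 k)).congr
    intro j
    rw [← add_mul, ← hVsplit (k - j)]
  have hconvV : ∀ k, conv V u k = conv V₀ u k + conv V₁ u k := by
    intro k
    rw [conv, conv, conv, ← Summable.tsum_add (hc1V0 k) (hc1V1 k)]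
    apply tsum_congr; intro j
    rw [hVsplit (k - j), add_mul]
  have hc2V : Summable fun k : ℤ => conv V u k * (starRingEnd ℂ) (u k) := by
    apply (hc2V0.add hc2V1).congr
    intro k
    rw [hconvV k, add_mul]
  have hPsplit : (∑' k : ℤ, conv V u k * (starRingEnd ℂ) (u k)) =
      (∑' k : ℤ, conv V₀ u k * (starRingEnd ℂ) (u k)) +
      ∑' k : ℤ, conv V₁ u k * (starRingEnd ℂ) (u k) := by
    rw [← Summable.tsum_add hc2V0 hc2V1]
    apply tsum_congr; intro k
    rw [hconvV k, add_mul]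
  have hdiff : tform m (Vn n) u - tform m V u =
      ∑' k : ℤ, conv W u k * (starRingEnd ℂ) (u k) := by
    unfold tform
    rw [add_sub_add_left_eq_sub, ← Summable.tsum_sub hc2Vn hc2V]
    apply tsum_congr; intro k
    rw [← sub_mul]
    congr 1
    rw [conv, conv, conv, ← Summable.tsum_sub (hc1Vn k) (hc1V k)]
    apply tsum_congr; intro j
    simp only [hWdef]
    rw [sub_mul]
  set N : ℝ := ∑' k : ℤ, wtp (m : ℝ) k * ‖u k‖ ^ 2 with hNdef
  have hNnn : 0 ≤ N :=
    tsum_nonneg fun k => mul_nonneg (wtp_nonneg _ _) (sq_nonneg _)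
  have hεW : ε n = hmnorm m W := rfl
  have hmain : ‖tform m (Vn n) u - tform m V u‖ ≤ Cm m * ε n * N := by
    rw [hdiff]
    calc ‖∑' k : ℤ, conv W u k * (starRingEnd ℂ) (u k)‖
        ≤ ∑' p : ℤ × ℤ, Gfun W u p := hc3W
      _ ≤ Cm m * hmnorm m W * N := hGWt
      _ = Cm m * ε n * N := by rw [hεW]
  set A2 : ℝ := ∑' k : ℤ, ‖u k‖ ^ 2 with hA2def
  have hA2nn : 0 ≤ A2 := tsum_nonneg fun k => sq_nonneg _
  set D : ℝ := ∑' k : ℤ, ((2 * Real.pi * (k : ℝ)) ^ (2 * m) * ‖u k‖ ^ 2 : ℝ) with hDdef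
  have hre : (tform m V u).re = D + (∑' k : ℤ, conv V u k * (starRingEnd ℂ) (u k)).re := by
    unfold tform
    rw [Complex.add_re, Complex.ofReal_re]
  have hP0 : ‖∑' k : ℤ, conv V₀ u k * (starRingEnd ℂ) (u k)‖ ≤ M * A2 :=
    le_trans hc3V0 hGV0t
  have hmV₁ : hmnorm m V₁ ≤ δ := by
    have h1 : (∑' k : ℤ, wtp (-(m : ℝ)) k * ‖V₁ k‖ ^ 2) ≤ δ ^ 2 := le_of_lt hT
    have h2 : ((∑' k : ℤ, wtp (-(m : ℝ)) k * ‖V₁ k‖ ^ 2) : ℝ) ^ ((1:ℝ)/2) ≤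
        (δ ^ 2) ^ ((1:ℝ)/2) :=
      Real.rpow_le_rpow
        (tsum_nonneg fun k => mul_nonneg (wtp_nonneg _ _) (sq_nonneg _)) h1 (by norm_num)
    calc hmnorm m V₁ = ((∑' k : ℤ, wtp (-(m : ℝ)) k * ‖V₁ k‖ ^ 2) : ℝ) ^ ((1:ℝ)/2) := rfl
      _ ≤ (δ ^ 2) ^ ((1:ℝ)/2) := h2
      _ = δ := by rw [← Real.sqrt_eq_rpow, Real.sqrt_sq hδpos.le]
  have hP1 : ‖∑' k : ℤ, conv V₁ u k * (starRingEnd ℂ) (u k)‖ ≤ (1/2) * N := by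
    calc ‖∑' k : ℤ, conv V₁ u k * (starRingEnd ℂ) (u k)‖
        ≤ ∑' p : ℤ × ℤ, Gfun V₁ u p := hc3V1
      _ ≤ Cm m * hmnorm m V₁ * N := hGV1t
      _ ≤ (1/2) * N := by
          apply mul_le_mul_of_nonneg_right ?_ hNnn
          calc Cm m * hmnorm m V₁ ≤ Cm m * δ :=
                mul_le_mul_of_nonneg_left hmV₁ (Cm_nonneg m)
            _ ≤ 1/2 := hCδ
  have hreP : -(M * A2 + (1/2) * N) ≤
      (∑' k : ℤ, conv V u k * (starRingEnd ℂ) (u k)).re := by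
    have habs : |(∑' k : ℤ, conv V u k * (starRingEnd ℂ) (u k)).re| ≤
        ‖∑' k : ℤ, conv V u k * (starRingEnd ℂ) (u k)‖ := by
      exact Complex.abs_re_le_norm _
    have hnb : ‖∑' k : ℤ, conv V u k * (starRingEnd ℂ) (u k)‖ ≤ M * A2 + (1/2) * N := by
      rw [hPsplit]
      exact le_trans (norm_add_le _ _) (add_le_add hP0 hP1)
    have := neg_abs_le (∑' k : ℤ, conv V u k * (starRingEnd ℂ) (u k)).re
    linarith
  have hNle : N ≤ A2 + D := N_le m hm u hu
  have hret : D - M * A2 - (1/2) * N ≤ (tform m V u).re := by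
    rw [hre]; linarith
  have hN2 : N ≤ 2 * (tform m V u).re + (2 * M + 2) * A2 := by linarith
  calc ‖tform m (Vn n) u - tform m V u‖ ≤ Cm m * ε n * N := hmain
    _ ≤ Cm m * ε n * (2 * (tform m V u).re + (2 * M + 2) * A2) :=
        mul_le_mul_of_nonneg_left hN2 (mul_nonneg (Cm_nonneg m) (hεnn n))
    _ = ((2 * M + 2) * Cm m) * ε n * A2 + (2 * Cm m) * ε n * (tform m V u).re := by ring
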